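/- arXiv:2102.11055 — 2 statements merged into one kernel-verified Lean document; each statement's English description precedes it below -/
import Mathlib

section
/- (Performance difference lemma) For any two policies π and π' in a finite discounted MDP, and any state s, V(s; π') - V(s; π) = (1/(1-γ)) E_{s' ~ d_s^{π'}} [A(s', π'(s'); π)], where d_s^{π'} is the normalized discounted state visitation distribution starting from s under π', and A(s,a;π) = Q(s,a;π) - V(s;π) is the advantage function. -/
/-- Performance difference lemma: for deterministic policies `π, π'`
in a finite discounted MDP,
`V(s;π') - V(s;π) = (1/(1-γ)) ∑_x d_s^{π'}(x) A(x, π'(x); π)`, where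
`d_s^{π'}(x) = (1-γ) ∑_t γ^t P(s_t = x | s_0 = s, π')` is the normalized
discounted visitation distribution and `A` is the advantage of `π`. -/
theorem stmt10 (S A : Type) [Fintype S] [DecidableEq S] (γ : ℝ) (hγ : γ ∈ Set.Ioo (0 : ℝ) 1)
    (p : S → A → S → ℝ) (hp_nonneg : ∀ s a s', 0 ≤ p s a s')
    (hp_sum : ∀ s a, ∑ s', p s a s' = 1)
    (r : S → A → ℝ)
    (π π' : S → A) (Vπ Vπ' : S → ℝ)
    (hV : ∀ s, Vπ s = r s (π s) + γ * ∑ s', p s (π s) s' * Vπ s')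
    (hV' : ∀ s, Vπ' s = r s (π' s) + γ * ∑ s', p s (π' s) s' * Vπ' s')
    (Q : S → A → ℝ)
    (hQ : ∀ s a, Q s a = r s a + γ * ∑ s', p s a s' * Vπ s')
    (Adv : S → A → ℝ) (hAdv : ∀ s a, Adv s a = Q s a - Vπ s)
    (Pmat : Matrix S S ℝ) (hPmat : ∀ i j, Pmat i j = p i (π' i) j)
    (d : S → S → ℝ)
    (hd : ∀ s x, d s x = (1 - γ) * ∑' t : ℕ, γ ^ t * (Pmat ^ t) s x)
    (s : S) :
    Vπ' s - Vπ s = (1 / (1 - γ)) * ∑ x, d s x * Adv x (π' x) := by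
  obtain ⟨hγ0, hγ1⟩ := hγ
  haveI : Nonempty S := ⟨s⟩
  set f : S → ℝ := fun x => Vπ' x - Vπ x with hf_def
  set g : S → ℝ := fun x => Adv x (π' x) with hg_def
  -- stochasticity of powers
  have hstoch : ∀ n : ℕ, (∀ i j, 0 ≤ (Pmat ^ n) i j) ∧ (∀ i, ∑ j, (Pmat ^ n) i j = 1) := by
    intro n
    induction n with
    | zero =>
      constructor
      · intro i j
        simp [Matrix.one_apply]
        split <;> norm_num
      · intro i; simp [Matrix.one_apply]
    | succ n ih =>
      have hmul : ∀ i j, (Pmat ^ (n+1)) i j = ∑ k, (Pmat ^ n) i k * Pmat k j := by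
        intro i j
        rw [pow_succ]
        simp [Matrix.mul_apply]
      constructor
      · intro i j
        rw [hmul]
        exact Finset.sum_nonneg fun k _ => mul_nonneg (ih.1 i k)
          (by rw [hPmat]; exact hp_nonneg _ _ _)
      · intro i
        simp only [hmul]
        rw [Finset.sum_comm]
        have : ∀ k, ∑ j, (Pmat ^ n) i k * Pmat k j = (Pmat ^ n) i k := by
          intro k
          rw [← Finset.mul_sum]
          have : ∑ j, Pmat k j = 1 := by
            simp only [hPmat]; exact hp_sum _ _
          rw [this, mul_one]
        simp only [this]
        exact ih.2 i
  have hentry_le_one : ∀ n i j, (Pmat ^ n) i j ≤ 1 := by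
    intro n i j
    calc (Pmat ^ n) i j ≤ ∑ k, (Pmat ^ n) i k :=
          Finset.single_le_sum (fun k _ => (hstoch n).1 i k) (Finset.mem_univ j)
      _ = 1 := (hstoch n).2 i
  -- recursion for f
  have hrec : ∀ x, f x = g x + γ * Pmat.mulVec f x := by
    intro x
    have hmv : Pmat.mulVec f x = ∑ y, p x (π' x) y * f y := by
      simp only [Matrix.mulVec, dotProduct, hPmat]
    rw [hmv]
    have h1 : ∑ y, p x (π' x) y * f y
        = (∑ y, p x (π' x) y * Vπ' y) - ∑ y, p x (π' x) y * Vπ y := by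
      rw [← Finset.sum_sub_distrib]
      congr 1; ext y; ring
    rw [h1]
    simp only [hg_def, hAdv, hQ, hf_def]
    rw [hV' x]
    ring
  have hf_eq : f = fun x => g x + γ * Pmat.mulVec f x := funext hrec
  -- iterated expansion
  have hiter : ∀ n x, f x = (∑ t ∈ Finset.range n, γ ^ t * (Pmat ^ t).mulVec g x)
      + γ ^ n * (Pmat ^ n).mulVec f x := by
    intro n
    induction n with
    | zero => intro x; simp [Matrix.one_mulVec]
    | succ n ih =>
      intro x
      rw [Finset.sum_range_succ, ih x]
      have hfe2 : (fun x => g x + γ * Pmat.mulVec f x) = g + γ • Pmat.mulVec f := by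
        funext z; simp [smul_eq_mul]
      have h2 : (Pmat ^ n).mulVec f
          = (Pmat ^ n).mulVec g + γ • (Pmat ^ (n+1)).mulVec f := by
        conv_lhs => rw [hf_eq, hfe2]
        rw [Matrix.mulVec_add, Matrix.mulVec_smul, Matrix.mulVec_mulVec, ← pow_succ]
      have h3 := congrFun h2 x
      simp only [Pi.add_apply, Pi.smul_apply, smul_eq_mul] at h3
      rw [h3]
      ring
  -- bounds
  have hbound : ∀ (v : S → ℝ) (C : ℝ), (∀ y, |v y| ≤ C) → ∀ n x, |(Pmat ^ n).mulVec v x| ≤ C := by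
    intro v C hC n x
    have h0 : 0 ≤ C := le_trans (abs_nonneg _) (hC x)
    calc |(Pmat ^ n).mulVec v x| = |∑ y, (Pmat ^ n) x y * v y| := by
          simp [Matrix.mulVec, dotProduct]
      _ ≤ ∑ y, |(Pmat ^ n) x y * v y| := Finset.abs_sum_le_sum_abs _ _
      _ ≤ ∑ y, (Pmat ^ n) x y * C := by
          apply Finset.sum_le_sum
          intro y _
          rw [abs_mul, abs_of_nonneg ((hstoch n).1 x y)]
          exact mul_le_mul_of_nonneg_left (hC y) ((hstoch n).1 x y)
      _ = C := by rw [← Finset.sum_mul, (hstoch n).2 x, one_mul]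
  obtain ⟨Cf, hCf⟩ : ∃ C, ∀ y, |f y| ≤ C :=
    ⟨Finset.univ.sup' Finset.univ_nonempty (fun y => |f y|),
      fun y => Finset.le_sup' (fun y => |f y|) (Finset.mem_univ y)⟩
  obtain ⟨Cg, hCg⟩ : ∃ C, ∀ y, |g y| ≤ C :=
    ⟨Finset.univ.sup' Finset.univ_nonempty (fun y => |g y|),
      fun y => Finset.le_sup' (fun y => |g y|) (Finset.mem_univ y)⟩
  have hCg0 : 0 ≤ Cg := le_trans (abs_nonneg _) (hCg s)
  -- summability of the series
  have hsummable : Summable (fun t : ℕ => γ ^ t * (Pmat ^ t).mulVec g s) := by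
    apply Summable.of_abs
    apply Summable.of_nonneg_of_le (fun t => abs_nonneg _) _
      ((summable_geometric_of_lt_one hγ0.le hγ1).mul_right Cg)
    intro t
    rw [abs_mul, abs_of_nonneg (pow_nonneg hγ0.le t)]
    exact mul_le_mul_of_nonneg_left (hbound g Cg hCg t s) (pow_nonneg hγ0.le t)
  -- f s is the sum
  have hHasSum : HasSum (fun t : ℕ => γ ^ t * (Pmat ^ t).mulVec g s) (f s) := by
    rw [hsummable.hasSum_iff_tendsto_nat]
    have hev : ∀ n, ∑ t ∈ Finset.range n, γ ^ t * (Pmat ^ t).mulVec g s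
        = f s - γ ^ n * (Pmat ^ n).mulVec f s := by
      intro n
      have := hiter n s
      linarith
    simp only [hev]
    have htend : Filter.Tendsto (fun n : ℕ => γ ^ n * (Pmat ^ n).mulVec f s)
        Filter.atTop (nhds 0) := by
      apply squeeze_zero_norm (fun n => ?_)
        ((tendsto_pow_atTop_nhds_zero_of_lt_one hγ0.le hγ1).const_mul Cf |>.congr
          (fun n => mul_comm Cf (γ ^ n)) |>.mono_right (le_of_eq (by rw [mul_zero])))
      · calc ‖γ ^ n * (Pmat ^ n).mulVec f s‖ = γ ^ n * |(Pmat ^ n).mulVec f s| := by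
              rw [norm_mul, Real.norm_eq_abs, Real.norm_eq_abs,
                abs_of_nonneg (pow_nonneg hγ0.le n)]
          _ ≤ γ ^ n * Cf := mul_le_mul_of_nonneg_left (hbound f Cf hCf n s)
              (pow_nonneg hγ0.le n)
    have := Filter.Tendsto.sub (tendsto_const_nhds (x := f s)) htend
    simpa using this
  have hfs : f s = ∑' t : ℕ, γ ^ t * (Pmat ^ t).mulVec g s := hHasSum.tsum_eq.symm
  -- summability of entry series
  have hsum_entry : ∀ x, Summable (fun t : ℕ => γ ^ t * (Pmat ^ t) s x) := by
    intro x
    apply Summable.of_abs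
    apply Summable.of_nonneg_of_le (fun t => abs_nonneg _) _
      (summable_geometric_of_lt_one hγ0.le hγ1)
    intro t
    rw [abs_mul, abs_of_nonneg (pow_nonneg hγ0.le t)]
    calc γ ^ t * |(Pmat ^ t) s x| ≤ γ ^ t * 1 := by
          apply mul_le_mul_of_nonneg_left _ (pow_nonneg hγ0.le t)
          rw [abs_of_nonneg ((hstoch t).1 s x)]
          exact hentry_le_one t s x
      _ = γ ^ t := mul_one _
  -- compute the RHS
  have h1γ : (1 : ℝ) - γ ≠ 0 := by linarith
  have hRHS : ∑ x, d s x * Adv x (π' x) = (1 - γ) * f s := by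
    have h1 : ∀ x, d s x * Adv x (π' x)
        = (1 - γ) * ∑' t : ℕ, γ ^ t * (Pmat ^ t) s x * g x := by
      intro x
      rw [hd, mul_assoc, ← tsum_mul_right]
    simp only [h1]
    rw [← Finset.mul_sum]
    congr 1
    rw [← Summable.tsum_finsetSum (fun x _ => ((hsum_entry x).mul_right (g x)))]
    rw [hfs]
    congr 1
    ext t
    simp only [Matrix.mulVec, dotProduct, Finset.mul_sum]
    congr 1
    ext x
    ring
  rw [hRHS]
  field_simp
  rfl
end

section
/- Consider the FWPO update in a finite-state MDP with direct tabular parameterization: for each state s, θ_{k+1}(s) = θ_k(s) + α_k(s)(c_k(s) - θ_k(s)) with c_k(s) the Frank-Wolfe vertex and α_k(s) ∈ (0, 2g_k(s)/(L D_s²)) whenever g_k(s) > 0. Assuming Q(s,·;π_k) is L-smooth in the action for every s, the new policy π_{k+1} satisfies V(s; π_{k+1}) ≥ V(s; π_k) for every state s. -/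
open scoped RealInnerProductSpace

lemma descent_aux {E : Type*} [NormedAddCommGroup E] [InnerProductSpace ℝ E] [CompleteSpace E]
    (Q : E → ℝ) (gQ : E → E) (L : ℝ)
    (hgrad : ∀ a, HasGradientAt Q (gQ a) a)
    (hsmooth : ∀ a a', ‖gQ a - gQ a'‖ ≤ L * ‖a - a'‖)
    (x d : E) :
    Q x + ⟪gQ x, d⟫ - L / 2 * ‖d‖ ^ 2 ≤ Q (x + d) := by
  set c : ℝ := ⟪gQ x, d⟫ with hc
  set K : ℝ := L / 2 * ‖d‖ ^ 2 with hK
  set φ : ℝ → ℝ := fun t => Q (x + t • d) - t * c + K * t ^ 2 with hφdef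
  have hφ : ∀ t : ℝ, HasDerivAt φ (⟪gQ (x + t • d), d⟫ - c + L * ‖d‖ ^ 2 * t) t := by
    intro t
    have hline : HasDerivAt (fun t : ℝ => x + t • d) d t := by
      simpa using ((hasDerivAt_id t).smul_const d).const_add x
    have hQd : HasDerivAt (fun t : ℝ => Q (x + t • d)) ⟪gQ (x + t • d), d⟫ t := by
      have hF := (hasGradientAt_iff_hasFDerivAt.mp (hgrad (x + t • d)))
      have h := hF.comp_hasDerivAt t hline
      simp at h
      exact h
    have h2 : HasDerivAt (fun t : ℝ => t * c) c t := by
      simpa using (hasDerivAt_id t).mul_const c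
    have h3 : HasDerivAt (fun t : ℝ => K * t ^ 2) (K * (2 * t)) t := by
      simpa using (hasDerivAt_pow 2 t).const_mul K
    have := (hQd.sub h2).add h3
    exact this.congr_deriv (by rw [hK]; ring)
  have hmono : MonotoneOn φ (Set.Icc (0 : ℝ) 1) := by
    apply monotoneOn_of_deriv_nonneg (convex_Icc 0 1)
    · exact fun t _ => ((hφ t).differentiableAt.continuousAt).continuousWithinAt
    · intro t ht
      exact ((hφ t).differentiableAt.differentiableWithinAt)
    · intro t ht
      rw [interior_Icc] at ht
      rw [(hφ t).deriv]
      have h1 : -(L * (t * ‖d‖) * ‖d‖) ≤ ⟪gQ (x + t • d) - gQ x, d⟫ := by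
        have habs := abs_real_inner_le_norm (gQ (x + t • d) - gQ x) d
        have hs : ‖gQ (x + t • d) - gQ x‖ ≤ L * (t * ‖d‖) := by
          have := hsmooth (x + t • d) x
          simpa [norm_smul, abs_of_pos ht.1] using this
        have := neg_abs_le ⟪gQ (x + t • d) - gQ x, d⟫
        nlinarith [norm_nonneg d, abs_nonneg ⟪gQ (x + t • d) - gQ x, d⟫]
      have h2 : ⟪gQ (x + t • d) - gQ x, d⟫ = ⟪gQ (x + t • d), d⟫ - c := by
        rw [hc, inner_sub_left]
      nlinarith [h1, h2]
  have h01 := hmono (Set.mem_Icc.mpr ⟨le_refl 0, zero_le_one⟩)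
    (Set.mem_Icc.mpr ⟨zero_le_one, le_refl 1⟩) zero_le_one
  simp only [hφdef, zero_smul, add_zero, one_smul] at h01
  nlinarith [h01]

/-- one FWPO update with tabular direct parameterization.
For each state `s`, `θ_{k+1}(s) = θ_k(s) + α_k(s) (c_k(s) - θ_k(s))` where
`c_k(s)` is the Frank-Wolfe vertex for `a ↦ Q(s,a;π_k)` over the compact convex
set `C(s)` of diameter `D s`, and `α_k(s) ∈ (0, 2 g_k(s)/(L D_s²))` whenever the
gap `g_k(s) > 0` (and `α_k(s) = 0` when `g_k(s) = 0`).  If `Q(s, ·; π_k)` is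
`L`-smooth for every `s`, the new policy improves: `V(s;π_{k+1}) ≥ V(s;π_k)`. -/
theorem stmt12 (S : Type) [Fintype S] (N : ℕ) (γ L : ℝ)
    (hγ : γ ∈ Set.Ioo (0 : ℝ) 1) (hL : 0 < L)
    (p : S → EuclideanSpace ℝ (Fin N) → S → ℝ)
    (hp_nonneg : ∀ s a s', 0 ≤ p s a s') (hp_sum : ∀ s a, ∑ s', p s a s' = 1)
    (r : S → EuclideanSpace ℝ (Fin N) → ℝ)
    (C : S → Set (EuclideanSpace ℝ (Fin N)))
    (hC : ∀ s, IsCompact (C s) ∧ Convex ℝ (C s))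
    (D : S → ℝ) (hD : ∀ s, 0 < D s)
    (hdiam : ∀ s, ∀ x ∈ C s, ∀ y ∈ C s, ‖x - y‖ ≤ D s)
    (θk θk1 ck : S → EuclideanSpace ℝ (Fin N)) (αk : S → ℝ)
    (hθk : ∀ s, θk s ∈ C s) (hck : ∀ s, ck s ∈ C s)
    (Vk Vk1 : S → ℝ)
    (hVk : ∀ s, Vk s = r s (θk s) + γ * ∑ s', p s (θk s) s' * Vk s')
    (hVk1 : ∀ s, Vk1 s = r s (θk1 s) + γ * ∑ s', p s (θk1 s) s' * Vk1 s')
    (Q : S → EuclideanSpace ℝ (Fin N) → ℝ)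
    (hQ : ∀ s a, Q s a = r s a + γ * ∑ s', p s a s' * Vk s')
    (gQ : S → EuclideanSpace ℝ (Fin N) → EuclideanSpace ℝ (Fin N))
    (hgrad : ∀ s a, HasGradientAt (Q s) (gQ s a) a)
    (hsmooth : ∀ s a a', ‖gQ s a - gQ s a'‖ ≤ L * ‖a - a'‖)
    (hmax : ∀ s, ∀ c ∈ C s, ⟪c, gQ s (θk s)⟫ ≤ ⟪ck s, gQ s (θk s)⟫)
    (g : S → ℝ) (hg : ∀ s, g s = ⟪ck s - θk s, gQ s (θk s)⟫)
    (hα : ∀ s, (0 < g s → αk s ∈ Set.Ioo (0 : ℝ) (2 * g s / (L * D s ^ 2))) ∧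
      (g s = 0 → αk s = 0))
    (hupdate : ∀ s, θk1 s = θk s + αk s • (ck s - θk s)) :
    ∀ s, Vk s ≤ Vk1 s := by
  -- Step 1: Q s (θk1 s) ≥ Q s (θk s) = Vk s
  have hQVk : ∀ s, Q s (θk s) = Vk s := fun s => by rw [hQ, ← hVk]
  have hgnonneg : ∀ s, 0 ≤ g s := by
    intro s
    have := hmax s (θk s) (hθk s)
    rw [hg, inner_sub_left]
    linarith
  have hkey : ∀ s, Vk s ≤ Q s (θk1 s) := by
    intro s
    rcases lt_or_eq_of_le (hgnonneg s) with hgpos | hgzero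
    · -- positive gap
      obtain ⟨hα0, hα1⟩ := (hα s).1 hgpos
      have hdesc := descent_aux (Q s) (gQ s) L (hgrad s) (hsmooth s) (θk s)
        (αk s • (ck s - θk s))
      rw [← hupdate s] at hdesc
      have hip : ⟪gQ s (θk s), αk s • (ck s - θk s)⟫ = αk s * g s := by
        rw [real_inner_smul_right, hg s, real_inner_comm]
      have hnrm : ‖αk s • (ck s - θk s)‖ = αk s * ‖ck s - θk s‖ := by
        rw [norm_smul, Real.norm_eq_abs, abs_of_pos hα0]
      have hdle : ‖ck s - θk s‖ ≤ D s := hdiam s (ck s) (hck s) (θk s) (hθk s)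
      have hDs := hD s
      have hLD : 0 < L * D s ^ 2 := by positivity
      have hαlt : αk s * (L * D s ^ 2) < 2 * g s := by
        have := (lt_div_iff₀ hLD).mp hα1
        linarith
      have hbound : 0 ≤ ⟪gQ s (θk s), αk s • (ck s - θk s)⟫
          - L / 2 * ‖αk s • (ck s - θk s)‖ ^ 2 := by
        rw [hip, hnrm]
        have hn0 : 0 ≤ ‖ck s - θk s‖ := norm_nonneg _
        have hn2 : ‖ck s - θk s‖ ^ 2 ≤ D s ^ 2 := by nlinarith
        nlinarith [mul_lt_mul_of_pos_left hαlt (half_pos hα0),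
          mul_le_mul_of_nonneg_left hn2 (by positivity : (0:ℝ) ≤ L / 2 * αk s ^ 2)]
      rw [← hQVk s]
      linarith
    · -- zero gap
      have hα0 := (hα s).2 hgzero.symm
      rw [hupdate s, hα0, zero_smul, add_zero, hQVk s]
  -- Step 2: contraction argument
  rcases isEmpty_or_nonempty S with hS | hS
  · intro s; exact isEmptyElim s
  set f : S → ℝ := fun s => Vk1 s - Vk s with hf
  have hrec : ∀ s, γ * ∑ s', p s (θk1 s) s' * f s' ≤ f s := by
    intro s
    have h1 := hVk1 s
    have h2 := hQ s (θk1 s)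
    have h3 := hkey s
    have hsplit : ∑ s', p s (θk1 s) s' * (Vk1 s' - Vk s')
        = (∑ s', p s (θk1 s) s' * Vk1 s') - ∑ s', p s (θk1 s) s' * Vk s' := by
      simp [mul_sub, Finset.sum_sub_distrib]
    have heq : f s = (Q s (θk1 s) - Vk s) + γ * ∑ s', p s (θk1 s) s' * (Vk1 s' - Vk s') := by
      simp only [hf]
      rw [h1, h2, hsplit]; ring
    have : ∑ s', p s (θk1 s) s' * (Vk1 s' - Vk s') = ∑ s', p s (θk1 s) s' * f s' := rfl
    rw [this] at heq
    linarith [heq, h3]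
  obtain ⟨s₀, _, hs₀⟩ := Finset.exists_min_image Finset.univ f ⟨Classical.arbitrary S, Finset.mem_univ _⟩
  have hmin : ∀ s', f s₀ ≤ f s' := fun s' => hs₀ s' (Finset.mem_univ s')
  have hsum : f s₀ ≤ ∑ s', p s₀ (θk1 s₀) s' * f s' := by
    calc f s₀ = ∑ s', p s₀ (θk1 s₀) s' * f s₀ := by
          rw [← Finset.sum_mul, hp_sum, one_mul]
      _ ≤ ∑ s', p s₀ (θk1 s₀) s' * f s' :=
          Finset.sum_le_sum fun s' _ => mul_le_mul_of_nonneg_left (hmin s') (hp_nonneg _ _ _)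
  have hγ0 := hγ.1
  have hγ1 := hγ.2
  have h0 : 0 ≤ f s₀ := by
    have := hrec s₀
    nlinarith [hsum]
  intro s
  have := hmin s
  simp only [hf] at this h0 ⊢
  linarith
end
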